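/- For any π₁, π₂ ∈ S_n and any 0 ≤ k ≤ n, there exists τ in the double coset set π₁·Z_n·π₂^{-1} = {π₁·c_n^j·π₂^{-1} : 0 ≤ j < n} such that Σ_{i=1}^k τ(i) ≤ k(n+1)/2. -/

import Mathlib

open Finset

def inversions {n : ℕ} (π : Equiv.Perm (Fin n)) : ℕ :=
  (Finset.univ.filter (fun p : Fin n × Fin n => p.1 < p.2 ∧ π p.2 < π p.1)).card

def winv {n : ℕ} (π : Equiv.Perm (Fin n)) : ℤ :=
  ∑ p ∈ Finset.univ.filter (fun p : Fin n × Fin n => p.1 < p.2 ∧ π p.2 < π p.1),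
    ((π p.1 : ℤ) - (π p.2 : ℤ))

def cwinv {n : ℕ} (π : Equiv.Perm (Fin n)) : ℤ :=
  n * inversions π - 2 * winv π

open Fin.NatCast Fin.CommRing in
lemma finRotate_pow_apply {m : ℕ} (j : ℕ) (x : Fin (m+1)) :
    ((finRotate (m+1)) ^ j) x = x + (j : Fin (m+1)) := by
  induction j with
  | zero => simp
  | succ j ih =>
    rw [pow_succ', Equiv.Perm.mul_apply, finRotate_succ_apply, ih]
    push_cast
    ring

lemma gauss_aux (m : ℕ) : ∑ r ∈ Finset.range (m+1), 2*(r+1) = (m+1)*(m+2) := by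
  induction m with
  | zero => simp
  | succ m ih => rw [Finset.sum_range_succ, ih]; ring

theorem exists_small_prefix {n : ℕ} (hn : 0 < n) (π₁ π₂ : Equiv.Perm (Fin n))
    (k : ℕ) (hk : k ≤ n) :
    ∃ j < n,
      2 * ∑ i ∈ Finset.univ.filter (fun i : Fin n => (i : ℕ) < k),
          (((π₁ * (finRotate n) ^ j * π₂⁻¹) i : ℕ) + 1)
        ≤ k * (n + 1) := by
  obtain ⟨m, rfl⟩ := Nat.exists_eq_succ_of_ne_zero hn.ne'
  by_contra hcon
  push_neg at hcon
  set F := Finset.univ.filter (fun i : Fin (m+1) => (i : ℕ) < k) with hF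
  have hFcard : F.card = k := by
    have hEq : F = (Finset.range k).attachFin
        (fun x hx => lt_of_lt_of_le (Finset.mem_range.mp hx) hk) := by
      ext i; simp [hF, Finset.mem_attachFin]
    rw [hEq, Finset.card_attachFin, Finset.card_range]
  have inner : ∀ i : Fin (m+1),
      ∑ j : Fin (m+1), 2 * (((π₁ * (finRotate (m+1)) ^ (j:ℕ) * π₂⁻¹) i : ℕ) + 1)
        = (m+1)*(m+2) := by
    intro i
    have h1 : ∀ j : Fin (m+1),
        (π₁ * (finRotate (m+1)) ^ (j:ℕ) * π₂⁻¹) i = π₁ (π₂⁻¹ i + j) := by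
      intro j
      simp [Equiv.Perm.mul_apply, finRotate_pow_apply, Fin.cast_val_eq_self]
    simp only [h1]
    have h2 := Equiv.sum_comp (Equiv.addLeft (π₂⁻¹ i))
      (fun y : Fin (m+1) => 2 * ((π₁ y : ℕ) + 1))
    simp only [Equiv.coe_addLeft] at h2
    rw [h2]
    rw [Equiv.sum_comp π₁ (fun z : Fin (m+1) => 2 * ((z : ℕ) + 1))]
    rw [Fin.sum_univ_eq_sum_range (fun r => 2 * (r + 1)) (m+1)]
    exact gauss_aux m
  have htotal : ∑ j : Fin (m+1),
      2 * ∑ i ∈ F, (((π₁ * (finRotate (m+1)) ^ (j:ℕ) * π₂⁻¹) i : ℕ) + 1)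
        = k * ((m+1) * (m+2)) := by
    simp only [Finset.mul_sum]
    rw [Finset.sum_comm]
    calc ∑ i ∈ F, ∑ j : Fin (m+1),
          2 * (((π₁ * (finRotate (m+1)) ^ (j:ℕ) * π₂⁻¹) i : ℕ) + 1)
        = ∑ _i ∈ F, (m+1)*(m+2) := by
          exact Finset.sum_congr rfl (fun i _ => inner i)
      _ = k * ((m+1) * (m+2)) := by rw [Finset.sum_const, hFcard, smul_eq_mul]
  have hlow : ∀ j : Fin (m+1), k * (m + 1 + 1) + 1 ≤
      2 * ∑ i ∈ F, (((π₁ * (finRotate (m+1)) ^ (j:ℕ) * π₂⁻¹) i : ℕ) + 1) :=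
    fun j => hcon (j : ℕ) j.isLt
  have hsum_low : (m+1) * (k * (m + 1 + 1) + 1) ≤ k * ((m+1) * (m+2)) := by
    rw [← htotal]
    calc (m+1) * (k * (m + 1 + 1) + 1)
        = ∑ _j : Fin (m+1), (k * (m + 1 + 1) + 1) := by
          rw [Finset.sum_const, Finset.card_univ, Fintype.card_fin, smul_eq_mul]
      _ ≤ _ := Finset.sum_le_sum (fun j _ => hlow j)
  nlinarith [hsum_low]
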